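/- Let C be the all-ones single parity-check code of length d over 𝔽_p (p prime, p ≥ 3, d ≥ 3), i.e., C = {c ∈ 𝔽_p^d : Σ c_i = 0}, and P = conv(F_v(C)) ⊂ ℝ^{dp}. Then dim(P) = d(p-1), the affine hull of P is the set of x satisfying Σ_{j∈𝔽_p} x_{i,j} = 1 for each i ∈ {1,...,d}, and each inequality x_{i,j} ≥ 0 defines a facet of P. -/

import Mathlib

/-- Constant-weight embedding `F_v`. -/
noncomputable def cwEmb (F : Type*) [DecidableEq F] (d : ℕ) (c : Fin d → F) :
    Fin d → F → ℝ :=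
  fun i δ => if δ = c i then 1 else 0

namespace Stmt13Aux

variable (p d : ℕ) [NeZero p]

/-- The row-sum linear map. -/
noncomputable def rowSumL : (Fin d → ZMod p → ℝ) →ₗ[ℝ] (Fin d → ℝ) where
  toFun x := fun i => ∑ j, x i j
  map_add' x y := by funext i; exact Finset.sum_add_distrib
  map_smul' c x := by funext i; simp [Finset.mul_sum]

/-- Evaluation at a single coordinate. -/
noncomputable def evalL (i : Fin d) (j : ZMod p) : (Fin d → ZMod p → ℝ) →ₗ[ℝ] ℝ where
  toFun x := x i j
  map_add' x y := rfl
  map_smul' c x := rfl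

@[simp] lemma rowSumL_apply (x : Fin d → ZMod p → ℝ) (i : Fin d) :
    rowSumL p d x i = ∑ j, x i j := rfl

@[simp] lemma evalL_apply (i : Fin d) (j : ZMod p) (x : Fin d → ZMod p → ℝ) :
    evalL p d i j x = x i j := rfl

/-- difference of two unit vectors within row `k`. -/
noncomputable def dvec (k : Fin d) (a b : ZMod p) : Fin d → ZMod p → ℝ :=
  fun k' j' => if k' = k then (if j' = a then 1 else 0) - (if j' = b then 1 else 0) else 0

lemma sum_cwEmb (c : Fin d → ZMod p) [NeZero p] (i : Fin d) :
    ∑ j, cwEmb (ZMod p) d c i j = 1 := by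
  simp [cwEmb, Finset.sum_ite_eq']

lemma exists_third {α : Type*} [Fintype α] (h3 : 3 ≤ Fintype.card α) (a b : α) :
    ∃ c, c ≠ a ∧ c ≠ b := by
  classical
  by_contra h
  push_neg at h
  have hsub : (Finset.univ : Finset α) ⊆ {a, b} := by
    intro x _
    rcases eq_or_ne x a with rfl | hx
    · simp
    · simp [h x hx]
  have := Finset.card_le_card hsub
  have hc : ({a, b} : Finset α).card ≤ 2 :=
    (Finset.card_insert_le _ _).trans (by simp)
  rw [Finset.card_univ] at this
  omega

section Span

variable {p d : ℕ} [NeZero p] [Fact p.Prime] (hp3 : 3 ≤ p) (hd : 3 ≤ d) (i : Fin d) (j : ZMod p)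

/-- Codewords avoiding value `j` in coordinate `i`. -/
def Cset : Set (Fin d → ZMod p) := {c | (∑ k, c k) = 0 ∧ c i ≠ j}

lemma wvec_mem (k i1 : Fin d) (hki1 : k ≠ i1) (hki : k ≠ i) (hi1i : i1 ≠ i)
    (a b : ZMod p) (hab : -(a + b) ≠ j) :
    (fun k' j' => (if k' = k then 1 - (p:ℝ) * (if j' = a then 1 else 0) else 0)
      + (if k' = i1 then 1 - (p:ℝ) * (if j' = b then 1 else 0) else 0) : Fin d → ZMod p → ℝ)
      ∈ vectorSpan ℝ (cwEmb (ZMod p) d '' Cset i j) := by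
  classical
  set cw : ZMod p → (Fin d → ZMod p) := fun s k' =>
    if k' = k then a + s else if k' = i1 then b - s else if k' = i then -(a + b) else 0 with hcwdef
  have hcwmem : ∀ s, cw s ∈ Cset i j := by
    intro s
    constructor
    · have hsplit : ∀ k', cw s k' =
          (if k' = k then a + s else 0) + (if k' = i1 then b - s else 0)
            + (if k' = i then -(a + b) else 0) := by
        intro k'
        simp only [hcwdef]
        split_ifs <;> simp_all <;> ring
      rw [Finset.sum_congr rfl (fun k' _ => hsplit k')]
      simp [Finset.sum_add_distrib, Finset.sum_ite_eq']
      try ring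
    · show cw s i ≠ j
      simpa [hcwdef, hki.symm, hi1i.symm] using hab
  have key : ∑ s : ZMod p, (cwEmb (ZMod p) d (cw s) - cwEmb (ZMod p) d (cw 0))
      = (fun k' j' => (if k' = k then 1 - (p:ℝ) * (if j' = a then 1 else 0) else 0)
      + (if k' = i1 then 1 - (p:ℝ) * (if j' = b then 1 else 0) else 0) : Fin d → ZMod p → ℝ) := by
    funext k' j'
    rw [Finset.sum_apply, Finset.sum_apply]
    simp only [Pi.sub_apply]
    by_cases hk : k' = k
    · subst hk
      have hval : ∀ s, cw s k' = a + s := fun s => by simp [hcwdef]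
      simp only [cwEmb, hval]
      rw [Finset.sum_sub_distrib]
      have h1 : ∑ s : ZMod p, (if j' = a + s then (1:ℝ) else 0) = 1 := by
        rw [Finset.sum_congr rfl (fun s _ => show (if j' = a + s then (1:ℝ) else 0)
          = if s = j' - a then 1 else 0 from if_congr
            ⟨fun h => by rw [h]; try ring, fun h => by rw [h]; try ring⟩ rfl rfl)]
        simp [Finset.sum_ite_eq']
      rw [h1]
      simp [hki1, hki, Finset.sum_const, Finset.card_univ, ZMod.card, add_zero]
      try ring
    · by_cases hk1 : k' = i1
      · subst hk1
        have hval : ∀ s, cw s k' = b - s := fun s => by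
          simp [hcwdef, hk]
        simp only [cwEmb, hval]
        rw [Finset.sum_sub_distrib]
        have h1 : ∑ s : ZMod p, (if j' = b - s then (1:ℝ) else 0) = 1 := by
          rw [Finset.sum_congr rfl (fun s _ => show (if j' = b - s then (1:ℝ) else 0)
            = if s = b - j' then 1 else 0 from if_congr
              ⟨fun h => by rw [h]; try ring, fun h => by rw [h]; try ring⟩ rfl rfl)]
          simp [Finset.sum_ite_eq']
        rw [h1]
        simp [hk, Finset.sum_const, Finset.card_univ, ZMod.card]
        try ring
      · have hval : ∀ s, cw s k' = cw 0 k' := fun s => by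
          simp only [hcwdef, if_neg hk, if_neg hk1]
        simp only [cwEmb, hval, sub_self, Finset.sum_const_zero]
        simp [hk, hk1]
  rw [← key]
  apply Submodule.sum_mem
  intro s _
  have h1 : cwEmb (ZMod p) d (cw s) ∈ cwEmb (ZMod p) d '' Cset i j := ⟨cw s, hcwmem s, rfl⟩
  have h2 : cwEmb (ZMod p) d (cw 0) ∈ cwEmb (ZMod p) d '' Cset i j := ⟨cw 0, hcwmem 0, rfl⟩
  have := vsub_mem_vectorSpan ℝ h1 h2
  rwa [vsub_eq_sub] at this

include hp3 hd in
lemma dvec_mem_ne (k : Fin d) (hki : k ≠ i) (a b : ZMod p) :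
    dvec p d k a b ∈ vectorSpan ℝ (cwEmb (ZMod p) d '' Cset i j) := by
  classical
  obtain ⟨i1, hi1i, hi1k⟩ := exists_third (by simpa using hd) i k
  obtain ⟨e, he1, he2⟩ := exists_third (α := ZMod p)
    (by simpa [ZMod.card] using hp3) (-j - a) (-j - b)
  have hpa : -(a + e) ≠ j := fun h => he1 (by linear_combination -h)
  have hpb : -(b + e) ≠ j := fun h => he2 (by linear_combination -h)
  have W1 := wvec_mem i j k i1 (Ne.symm hi1k) hki hi1i a e hpa
  have W2 := wvec_mem i j k i1 (Ne.symm hi1k) hki hi1i b e hpb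
  have hp0 : (p : ℝ) ≠ 0 := by
    have := (Fact.out : p.Prime).pos; positivity
  have hrw : dvec p d k a b = (p : ℝ)⁻¹ • ((fun k' j' =>
      (if k' = k then 1 - (p:ℝ) * (if j' = b then 1 else 0) else 0)
      + (if k' = i1 then 1 - (p:ℝ) * (if j' = e then 1 else 0) else 0) : Fin d → ZMod p → ℝ)
      - (fun k' j' =>
      (if k' = k then 1 - (p:ℝ) * (if j' = a then 1 else 0) else 0)
      + (if k' = i1 then 1 - (p:ℝ) * (if j' = e then 1 else 0) else 0))) := by
    funext k' j'
    simp only [dvec, Pi.smul_apply, Pi.sub_apply, smul_eq_mul]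
    split_ifs <;> field_simp <;> ring
  rw [hrw]
  exact Submodule.smul_mem _ _ (Submodule.sub_mem _ W2 W1)

include hp3 hd in
lemma dvec_mem_i (a b : ZMod p) (ha : a ≠ j) (hb : b ≠ j) :
    dvec p d i a b ∈ vectorSpan ℝ (cwEmb (ZMod p) d '' Cset i j) := by
  classical
  obtain ⟨k, hki, -⟩ := exists_third (by simpa using hd) i i
  set c1 : Fin d → ZMod p := fun k' => if k' = i then a else if k' = k then -a else 0 with hc1
  set c2 : Fin d → ZMod p := fun k' => if k' = i then b else if k' = k then -b else 0 with hc2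
  have hc1mem : c1 ∈ Cset i j := by
    constructor
    · have hsplit : ∀ k', c1 k' = (if k' = i then a else 0) + (if k' = k then -a else 0) := by
        intro k'; simp only [hc1]; split_ifs <;> simp_all
      rw [Finset.sum_congr rfl (fun k' _ => hsplit k')]
      simp [Finset.sum_add_distrib, Finset.sum_ite_eq']
    · show c1 i ≠ j
      simpa [hc1] using ha
  have hc2mem : c2 ∈ Cset i j := by
    constructor
    · have hsplit : ∀ k', c2 k' = (if k' = i then b else 0) + (if k' = k then -b else 0) := by
        intro k'; simp only [hc2]; split_ifs <;> simp_all
      rw [Finset.sum_congr rfl (fun k' _ => hsplit k')]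
      simp [Finset.sum_add_distrib, Finset.sum_ite_eq']
    · show c2 i ≠ j
      simpa [hc2] using hb
  have hdiff : cwEmb (ZMod p) d c1 - cwEmb (ZMod p) d c2
      = dvec p d i a b + dvec p d k (-a) (-b) := by
    funext k' j'
    simp only [cwEmb, dvec, Pi.sub_apply, Pi.add_apply, hc1, hc2]
    by_cases h1 : k' = i
    · simp [h1, Ne.symm hki]
    · by_cases h2 : k' = k
      · simp [h1, h2, hki]
      · simp [h1, h2]
  have hsub : dvec p d i a b = (cwEmb (ZMod p) d c1 - cwEmb (ZMod p) d c2)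
      - dvec p d k (-a) (-b) := by rw [hdiff]; ring
  rw [hsub]
  refine Submodule.sub_mem _ ?_ (dvec_mem_ne hp3 hd i j k hki (-a) (-b))
  have hm1 : cwEmb (ZMod p) d c1 ∈ cwEmb (ZMod p) d '' Cset i j :=
    Set.mem_image_of_mem _ hc1mem
  have hm2 : cwEmb (ZMod p) d c2 ∈ cwEmb (ZMod p) d '' Cset i j :=
    Set.mem_image_of_mem _ hc2mem
  have := vsub_mem_vectorSpan ℝ hm1 hm2
  rwa [vsub_eq_sub] at this

end Span

/-- The decomposition of a "rows sum to zero" vector into `dvec`s. -/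
lemma decomp {p d : ℕ} [NeZero p] (x : Fin d → ZMod p → ℝ)
    (hx : ∀ k, ∑ j', x k j' = 0) (β : Fin d → ZMod p) :
    x = ∑ k, ∑ a, x k a • dvec p d k a (β k) := by
  classical
  funext k₀ j₀
  rw [Finset.sum_apply, Finset.sum_apply]
  simp only [Finset.sum_apply, Pi.smul_apply, smul_eq_mul]
  have hterm : ∀ k, ∑ a, x k a * dvec p d k a (β k) k₀ j₀
      = if k₀ = k then ∑ a, x k a * ((if j₀ = a then 1 else 0) - (if j₀ = β k then 1 else 0))
        else 0 := by
    intro k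
    by_cases h : k₀ = k
    · simp [dvec, h]
    · simp [dvec, h]
  rw [Finset.sum_congr rfl (fun k _ => hterm k), Finset.sum_ite_eq]
  simp only [Finset.mem_univ, if_true]
  have : ∑ a, x k₀ a * ((if j₀ = a then 1 else 0) - (if j₀ = β k₀ then 1 else 0))
      = (∑ a, x k₀ a * (if j₀ = a then 1 else 0))
        - (∑ a, x k₀ a) * (if j₀ = β k₀ then 1 else 0) := by
    rw [Finset.sum_mul, ← Finset.sum_sub_distrib]
    exact Finset.sum_congr rfl (fun a _ => by ring)
  rw [this, hx k₀, zero_mul, sub_zero]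
  have : ∀ a : ZMod p, x k₀ a * (if j₀ = a then 1 else 0) = if a = j₀ then x k₀ a else 0 := by
    intro a
    rcases eq_or_ne a j₀ with rfl | h
    · simp
    · simp [h, (Ne.symm h : ¬ j₀ = a)]
  rw [Finset.sum_congr rfl (fun a _ => this a), Finset.sum_ite_eq']
  simp

end Stmt13Aux

/-- for the all-ones SPC code `C` of length `d ≥ 3` over `𝔽_p`
(`p ≥ 3` prime) and `P = conv(F_v(C))`: `dim P = d(p-1)`, the affine hull of `P`
is described by the simplex equations `Σ_j x_{i,j} = 1`, and each inequality
`x_{i,j} ≥ 0` defines a facet of `P`. -/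
theorem stmt13 (p : ℕ) [Fact p.Prime] (hp3 : 3 ≤ p) (d : ℕ) (hd : 3 ≤ d) :
    Module.finrank ℝ
        (affineSpan ℝ (convexHull ℝ
          (cwEmb (ZMod p) d '' {c : Fin d → ZMod p | ∑ i, c i = 0}))).direction
      = d * (p - 1) ∧
    ((affineSpan ℝ (convexHull ℝ
        (cwEmb (ZMod p) d '' {c : Fin d → ZMod p | ∑ i, c i = 0})) :
          Set (Fin d → ZMod p → ℝ)) =
      {x | ∀ i : Fin d, ∑ j : ZMod p, x i j = 1}) ∧
    (∀ (i : Fin d) (j : ZMod p),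
      Module.finrank ℝ
          (affineSpan ℝ {x ∈ convexHull ℝ
            (cwEmb (ZMod p) d '' {c : Fin d → ZMod p | ∑ i, c i = 0}) |
              x i j = 0}).direction
        = d * (p - 1) - 1) := by
  classical
  haveI : NeZero p := ⟨(Fact.out : p.Prime).ne_zero⟩
  haveI : Fact (1 < p) := ⟨(Fact.out : p.Prime).one_lt⟩
  open Stmt13Aux in
  set Cfull : Set (Fin d → ZMod p) := {c : Fin d → ZMod p | ∑ i, c i = 0} with hCfull
  set V : Set (Fin d → ZMod p → ℝ) := cwEmb (ZMod p) d '' Cfull with hV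
  have hmul : d * (p - 1) + d = d * p := by
    rw [← Nat.mul_succ]
    congr 1
    omega
  have hE : Module.finrank ℝ (Fin d → ZMod p → ℝ) = d * p := by
    rw [Module.finrank_pi_fintype]
    simp [Module.finrank_fintype_fun_eq_card, ZMod.card, mul_comm]
  have hD : Module.finrank ℝ (Fin d → ℝ) = d := by
    simp [Module.finrank_fintype_fun_eq_card]
  -- the full vector span
  have hfull : vectorSpan ℝ V = LinearMap.ker (rowSumL p d) := by
    apply le_antisymm
    · rw [vectorSpan_def, Submodule.span_le]
      intro z hz
      rw [Set.mem_vsub] at hz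
      obtain ⟨u, hu, v, hv, rfl⟩ := hz
      obtain ⟨cu, hcu, rfl⟩ := hu
      obtain ⟨cv, hcv, rfl⟩ := hv
      rw [vsub_eq_sub]
      simp only [SetLike.mem_coe, LinearMap.mem_ker]
      funext k
      rw [map_sub, Pi.sub_apply, Pi.zero_apply, rowSumL_apply, rowSumL_apply,
        sum_cwEmb, sum_cwEmb, sub_self]
    · intro x hx
      rw [LinearMap.mem_ker] at hx
      have hx' : ∀ k, ∑ j', x k j' = 0 := fun k => congrFun hx k
      rw [decomp x hx' (fun _ => 0)]
      refine Submodule.sum_mem _ (fun k _ => Submodule.sum_mem _ (fun a _ =>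
        Submodule.smul_mem _ _ ?_))
      obtain ⟨i', hi'k, -⟩ := exists_third (by simpa using hd) k k
      have hsub : Cset i' (0 : ZMod p) ⊆ Cfull := fun c hc => hc.1
      exact vectorSpan_mono ℝ (Set.image_mono hsub)
        (dvec_mem_ne hp3 hd i' 0 k hi'k.symm a 0)
  -- kernel dimension of rowSumL
  have hker1 : Module.finrank ℝ (LinearMap.ker (rowSumL p d)) = d * p - d := by
    have hsurj : Function.Surjective (rowSumL p d) := by
      intro y
      refine ⟨fun k j' => if j' = 0 then y k else 0, ?_⟩
      funext k
      rw [rowSumL_apply]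
      simp [Finset.sum_ite_eq']
    have h := LinearMap.finrank_range_add_finrank_ker (rowSumL p d)
    rw [LinearMap.range_eq_top.mpr hsurj, finrank_top, hE, hD] at h
    omega
  -- part 2
  have hset : ((affineSpan ℝ (convexHull ℝ V)) : Set (Fin d → ZMod p → ℝ))
      = {x | ∀ i : Fin d, ∑ j : ZMod p, x i j = 1} := by
    rw [affineSpan_convexHull]
    have h0C : (0 : Fin d → ZMod p) ∈ Cfull := by simp [hCfull]
    have h0V : cwEmb (ZMod p) d 0 ∈ V := Set.mem_image_of_mem _ h0C
    ext x
    constructor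
    · intro hx k
      have hd0 : x - cwEmb (ZMod p) d 0 ∈ (affineSpan ℝ V).direction := by
        have := AffineSubspace.vsub_mem_direction hx (subset_affineSpan ℝ V h0V)
        rwa [vsub_eq_sub] at this
      rw [direction_affineSpan, hfull, LinearMap.mem_ker] at hd0
      have h1 := congrFun hd0 k
      rw [rowSumL_apply, Pi.zero_apply] at h1
      have h2 : ∑ j', x k j' - ∑ j', cwEmb (ZMod p) d 0 k j' = 0 := by
        rw [← Finset.sum_sub_distrib]
        exact h1
      rw [sum_cwEmb] at h2
      linarith
    · intro hx
      have hmem : x - cwEmb (ZMod p) d 0 ∈ (affineSpan ℝ V).direction := by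
        rw [direction_affineSpan, hfull, LinearMap.mem_ker]
        funext k
        rw [rowSumL_apply, Pi.zero_apply]
        have : ∑ j', x k j' - ∑ j', cwEmb (ZMod p) d 0 k j' = 0 := by
          rw [sum_cwEmb, hx k]
          ring
        rw [← Finset.sum_sub_distrib] at this
        exact this
      have := AffineSubspace.vadd_mem_of_mem_direction hmem
        (subset_affineSpan ℝ V h0V)
      simpa [vadd_eq_add, sub_add_cancel] using this
  refine ⟨?_, hset, ?_⟩
  · rw [affineSpan_convexHull, direction_affineSpan, hfull, hker1]
    omega
  · intro i j
    set Lij : (Fin d → ZMod p → ℝ) →ₗ[ℝ] (Fin d → ℝ) × ℝ :=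
      (rowSumL p d).prod (evalL p d i j) with hLij
    have hne : (j + 1 : ZMod p) ≠ j := by
      intro h
      have : (1 : ZMod p) = 0 := by linear_combination h
      exact one_ne_zero this
    -- kernel dimension of Lij
    have hker2 : Module.finrank ℝ (LinearMap.ker Lij) = d * p - (d + 1) := by
      have hsurj : Function.Surjective Lij := by
        rintro ⟨y, t⟩
        refine ⟨fun k' j' => if k' = i
          then ((if j' = j then t else 0) + (if j' = j + 1 then y i - t else 0))
          else (if j' = 0 then y k' else 0), ?_⟩
        have hpair : Lij (fun k' j' => if k' = i
            then ((if j' = j then t else 0) + (if j' = j + 1 then y i - t else 0))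
            else (if j' = 0 then y k' else 0)) = (rowSumL p d (fun k' j' => if k' = i
            then ((if j' = j then t else 0) + (if j' = j + 1 then y i - t else 0))
            else (if j' = 0 then y k' else 0)), evalL p d i j (fun k' j' => if k' = i
            then ((if j' = j then t else 0) + (if j' = j + 1 then y i - t else 0))
            else (if j' = 0 then y k' else 0))) := rfl
        rw [hpair, Prod.mk.injEq]
        constructor
        · funext k
          rw [rowSumL_apply]
          by_cases hk : k = i
          · subst hk
            simp [Finset.sum_add_distrib, Finset.sum_ite_eq']
          · simp [hk, Finset.sum_ite_eq']
        · simp [evalL, Ne.symm hne]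
      have h := LinearMap.finrank_range_add_finrank_ker Lij
      rw [LinearMap.range_eq_top.mpr hsurj, finrank_top, hE,
        Module.finrank_prod, hD] at h
      simp at h
      omega
    -- the facet span
    have hfacetspan : vectorSpan ℝ (cwEmb (ZMod p) d '' Cset i j)
        = LinearMap.ker Lij := by
      apply le_antisymm
      · rw [vectorSpan_def, Submodule.span_le]
        intro z hz
        rw [Set.mem_vsub] at hz
        obtain ⟨u, hu, v, hv, rfl⟩ := hz
        obtain ⟨cu, hcu, rfl⟩ := hu
        obtain ⟨cv, hcv, rfl⟩ := hv
        rw [vsub_eq_sub]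
        simp only [SetLike.mem_coe, LinearMap.mem_ker]
        rw [hLij, LinearMap.prod_apply, Function.prod, Prod.mk_eq_zero]
        constructor
        · funext k
          rw [map_sub, Pi.sub_apply, Pi.zero_apply, rowSumL_apply, rowSumL_apply,
            sum_cwEmb, sum_cwEmb, sub_self]
        · rw [map_sub]
          simp only [evalL, LinearMap.coe_mk, AddHom.coe_mk, Pi.sub_apply]
          have hu0 : cwEmb (ZMod p) d cu i j = 0 := by
            simp [cwEmb, Ne.symm hcu.2]
          have hv0 : cwEmb (ZMod p) d cv i j = 0 := by
            simp [cwEmb, Ne.symm hcv.2]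
          rw [hu0, hv0, sub_self]
      · intro x hx
        rw [LinearMap.mem_ker, hLij, LinearMap.prod_apply, Function.prod,
          Prod.mk_eq_zero] at hx
        obtain ⟨hx1, hx2⟩ := hx
        have hx1' : ∀ k, ∑ j', x k j' = 0 := fun k => congrFun hx1 k
        have hx2' : x i j = 0 := hx2
        rw [decomp x hx1' (fun k => if k = i then j + 1 else 0)]
        refine Submodule.sum_mem _ (fun k _ => Submodule.sum_mem _ (fun a _ => ?_))
        by_cases hk : k = i
        · subst hk
          by_cases haj : a = j
          · have h0 : x k a = 0 := by rw [haj]; exact hx2'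
            rw [h0, zero_smul]
            exact Submodule.zero_mem _
          · refine Submodule.smul_mem _ _ ?_
            simp only [if_pos rfl]
            exact dvec_mem_i hp3 hd k j a (j + 1) haj hne
        · refine Submodule.smul_mem _ _ ?_
          simp only [if_neg hk]
          exact dvec_mem_ne hp3 hd i j k hk a 0
    -- direction of the facet
    have hF : (affineSpan ℝ {x ∈ convexHull ℝ V | x i j = 0}).direction
        = LinearMap.ker Lij := by
      rw [direction_affineSpan]
      apply le_antisymm
      · rw [vectorSpan_def, Submodule.span_le]
        intro z hz
        rw [Set.mem_vsub] at hz
        obtain ⟨u, ⟨huP, hu0⟩, v, ⟨hvP, hv0⟩, rfl⟩ := hz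
        have hu1 : ∀ k, ∑ j', u k j' = 1 := by
          have := subset_affineSpan ℝ (convexHull ℝ V) huP
          rw [hset] at this
          exact this
        have hv1 : ∀ k, ∑ j', v k j' = 1 := by
          have := subset_affineSpan ℝ (convexHull ℝ V) hvP
          rw [hset] at this
          exact this
        rw [vsub_eq_sub]
        simp only [SetLike.mem_coe, LinearMap.mem_ker]
        rw [hLij, LinearMap.prod_apply, Function.prod, Prod.mk_eq_zero]
        constructor
        · funext k
          rw [map_sub, Pi.sub_apply, Pi.zero_apply, rowSumL_apply, rowSumL_apply,
            hu1 k, hv1 k, sub_self]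
        · rw [map_sub]
          simp only [evalL, LinearMap.coe_mk, AddHom.coe_mk, Pi.sub_apply]
          rw [hu0, hv0, sub_self]
      · rw [← hfacetspan]
        refine vectorSpan_mono ℝ ?_
        rintro z ⟨c, ⟨hc0, hcij⟩, rfl⟩
        refine ⟨subset_convexHull ℝ V (Set.mem_image_of_mem _ hc0), ?_⟩
        simp [cwEmb, Ne.symm hcij]
    rw [hF, hker2]
    omega
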